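/- In the discrete lm-SCM for the motivating example (Figure 1c), under Positivity and with the true Nuisance functions, the population mean of the context-parameterized AIPW score equals the NATE: E[ (Q_R(1) − Q_R(0)) + (A − π_R) / (π_R (1 − π_R)) · (Y₁ − Q_R(A)) ] = θ, where pointwise on Ω, Q_R(a) := if R = 1 then Q₁(W, Y₀, a) else Q₀(W, a), and π_R := if R = 1 then π₁(W, Y₀) else π₀(W). -/

import Mathlib

open MeasureTheory ProbabilityTheory

/-- Conditional probability of `S` given the event `E`: `μ(S ∩ E) / μ(E)`. -/
noncomputable def cprob {Ω : Type*} [MeasurableSpace Ω] (μ : Measure Ω) (S E : Set Ω) : ENNReal :=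
  μ (S ∩ E) / μ E

/-- Conditional expectation of `X` given the event `E`: `μ(E)⁻¹ * ∫_E X dμ`. -/
noncomputable def cexp {Ω : Type*} [MeasurableSpace Ω] (μ : Measure Ω) (X : Ω → ℝ) (E : Set Ω) : ℝ :=
  ((μ E).toReal)⁻¹ * ∫ ω in E, X ω ∂μ

lemma aux_indep_setIntegral {Ω β 𝒰 : Type*} [MeasurableSpace Ω] [MeasurableSpace β]
    [MeasurableSpace 𝒰] (μ : Measure Ω) [IsProbabilityMeasure μ]
    {V : Ω → β} {U : Ω → 𝒰} (hV : Measurable V) (hU : Measurable U)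
    (hind : IndepFun V U μ) {S : Set β} (hS : MeasurableSet S) {φ : 𝒰 → ℝ}
    (hφ : Measurable φ) (hInt : IntegrableOn (fun ω => φ (U ω)) (V ⁻¹' S) μ)
    (hne : μ (V ⁻¹' S) ≠ 0) :
    Integrable (fun ω => φ (U ω)) μ ∧
      ∫ ω in V ⁻¹' S, φ (U ω) ∂μ = (μ (V ⁻¹' S)).toReal * ∫ ω, φ (U ω) ∂μ := by
  have hE : MeasurableSet (V ⁻¹' S) := hV hS
  have hindE : IndepFun (fun ω => S.indicator (fun _ => (1 : ENNReal)) (V ω))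
      (fun ω => (‖φ (U ω)‖₊ : ENNReal)) μ :=
    hind.comp (measurable_const.indicator hS)
      (measurable_coe_nnreal_ennreal.comp hφ.nnnorm)
  have hlm := lintegral_mul_eq_lintegral_mul_lintegral_of_indepFun
      ((measurable_const.indicator hS).comp hV)
      ((measurable_coe_nnreal_ennreal.comp hφ.nnnorm).comp hU) hindE
  have hfun : ∀ ω, S.indicator (fun _ => (1 : ENNReal)) (V ω) * (‖φ (U ω)‖₊ : ENNReal)
      = (V ⁻¹' S).indicator (fun ω => (‖φ (U ω)‖₊ : ENNReal)) ω := by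
    intro ω
    by_cases h : V ω ∈ S <;>
      simp [Set.indicator_of_mem, Set.indicator_of_notMem, h, Set.mem_preimage]
  have hfun2 : ∀ ω, S.indicator (fun _ => (1 : ENNReal)) (V ω)
      = (V ⁻¹' S).indicator (fun _ => (1 : ENNReal)) ω := by
    intro ω
    by_cases h : V ω ∈ S <;>
      simp [Set.indicator_of_mem, Set.indicator_of_notMem, h, Set.mem_preimage]
  simp only [Function.comp_apply, Pi.mul_apply] at hlm
  rw [lintegral_congr hfun, lintegral_indicator hE, lintegral_congr hfun2,
    lintegral_indicator hE, setLIntegral_one] at hlm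
  have hfinE : ∫⁻ ω in V ⁻¹' S, (‖φ (U ω)‖₊ : ENNReal) ∂μ < ⊤ := hInt.2
  have hglob : ∫⁻ ω, (‖φ (U ω)‖₊ : ENNReal) ∂μ < ⊤ := by
    by_contra htop
    push_neg at htop
    rw [top_le_iff] at htop
    rw [htop, ENNReal.mul_top hne] at hlm
    rw [hlm] at hfinE
    exact absurd hfinE (lt_irrefl _)
  have hIntG : Integrable (fun ω => φ (U ω)) μ := ⟨(hφ.comp hU).aestronglyMeasurable, hglob⟩
  refine ⟨hIntG, ?_⟩
  have hindR : IndepFun (fun ω => S.indicator (fun _ => (1 : ℝ)) (V ω))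
      (fun ω => φ (U ω)) μ := hind.comp (measurable_const.indicator hS) hφ
  have hfun2R : (fun ω => S.indicator (fun _ => (1 : ℝ)) (V ω))
      = (V ⁻¹' S).indicator (fun _ => (1 : ℝ)) := by
    funext ω
    by_cases h : V ω ∈ S <;>
      simp [Set.indicator_of_mem, Set.indicator_of_notMem, h, Set.mem_preimage]
  have hIi : Integrable (fun ω => S.indicator (fun _ => (1 : ℝ)) (V ω)) μ := by
    rw [hfun2R]
    exact (integrable_const (1 : ℝ)).indicator hE
  have hmul := hindR.integral_mul_eq_mul_integral hIi.1 hIntG.1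
  have hprod : (fun ω => S.indicator (fun _ => (1 : ℝ)) (V ω)) * (fun ω => φ (U ω))
      = (V ⁻¹' S).indicator (fun ω => φ (U ω)) := by
    funext ω
    by_cases h : V ω ∈ S <;>
      simp [Set.indicator_of_mem, Set.indicator_of_notMem, h, Set.mem_preimage]
  rw [hprod, integral_indicator hE, hfun2R] at hmul
  rw [hmul]
  congr 1
  exact integral_indicator_one hE

lemma aux_integral_partition {Ω κ : Type*} [MeasurableSpace Ω] [Fintype κ]
    [MeasurableSpace κ] [MeasurableSingletonClass κ] (μ : Measure Ω)
    {T : Ω → κ} (hT : Measurable T) {f : Ω → ℝ} (hf : Integrable f μ) :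
    ∫ ω, f ω ∂μ = ∑ k, ∫ ω in T ⁻¹' {k}, f ω ∂μ := by
  have hm : ∀ k : κ, MeasurableSet (T ⁻¹' {k}) := fun k => hT (measurableSet_singleton k)
  have hd : Pairwise (Function.onFun Disjoint fun k : κ => T ⁻¹' {k}) := fun i j hij =>
    Set.disjoint_left.2 (by
      rintro ω hi hj
      exact hij (hi.symm.trans hj))
  have hu : (⋃ k : κ, T ⁻¹' {k}) = Set.univ := by
    ext ω; simp
  rw [← setIntegral_univ, ← hu, integral_iUnion hm hd (by rw [hu]; exact hf.integrableOn),
    tsum_fintype]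

/-- In the discrete lm-SCM of Figure 1c, under positivity and with the true nuisance functions, the population mean of the context-parameterized AIPW score equals the NATE. -/
theorem lmSCM_aipw_unbiased
    {Ω 𝒲 𝒴₀ 𝒰₀ 𝒰R 𝒰A 𝒰Y : Type*}
    [MeasurableSpace Ω]
    [Fintype 𝒲] [Nonempty 𝒲] [MeasurableSpace 𝒲] [MeasurableSingletonClass 𝒲]
    [Fintype 𝒴₀] [Nonempty 𝒴₀] [MeasurableSpace 𝒴₀] [MeasurableSingletonClass 𝒴₀]
    [MeasurableSpace 𝒰₀] [MeasurableSpace 𝒰R] [MeasurableSpace 𝒰A] [MeasurableSpace 𝒰Y]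
    (μ : Measure Ω) [IsProbabilityMeasure μ]
    (W : Ω → 𝒲) (U₀ : Ω → 𝒰₀) (UR : Ω → 𝒰R) (UA : Ω → 𝒰A) (UY : Ω → 𝒰Y)
    (hW : Measurable W) (hU₀ : Measurable U₀) (hUR : Measurable UR)
    (hUA : Measurable UA) (hUY : Measurable UY)
    (hIndep : iIndep
      (![MeasurableSpace.comap W inferInstance, MeasurableSpace.comap U₀ inferInstance,
         MeasurableSpace.comap UR inferInstance, MeasurableSpace.comap UA inferInstance,
         MeasurableSpace.comap UY inferInstance] : Fin 5 → MeasurableSpace Ω) μ)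
    (f₀ : 𝒲 × 𝒰₀ → 𝒴₀) (hf₀ : Measurable f₀)
    (fR : 𝒲 × 𝒰R → Fin 2) (hfR : Measurable fR)
    (fA : 𝒲 × 𝒴₀ × 𝒰A → Fin 2) (hfA : Measurable fA)
    (gA : 𝒲 × 𝒰A → Fin 2) (hgA : Measurable gA)
    (fY : 𝒲 × 𝒴₀ × Fin 2 × 𝒰Y → ℝ) (hfY : Measurable fY)
    (gY : 𝒲 × Fin 2 × 𝒰Y → ℝ) (hgY : Measurable gY)
    (Y₀ : Ω → 𝒴₀) (R A : Ω → Fin 2) (Y₁ : Ω → ℝ)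
    (hY₀ : ∀ ω, Y₀ ω = f₀ (W ω, U₀ ω))
    (hR : ∀ ω, R ω = fR (W ω, UR ω))
    (hA : ∀ ω, A ω = if R ω = 1 then fA (W ω, Y₀ ω, UA ω) else gA (W ω, UA ω))
    (hY₁ : ∀ ω, Y₁ ω = if R ω = 1 then fY (W ω, Y₀ ω, A ω, UY ω) else gY (W ω, A ω, UY ω))
    (Ynat : Fin 2 → Ω → ℝ)
    (hYnat : ∀ (a : Fin 2) (ω : Ω),
      Ynat a ω = if R ω = 1 then fY (W ω, Y₀ ω, a, UY ω) else gY (W ω, a, UY ω))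
    (Yful : Fin 2 → Ω → ℝ)
    (hYful : ∀ (a : Fin 2) (ω : Ω), Yful a ω = fY (W ω, Y₀ ω, a, UY ω))
    (hIntY₁ : Integrable Y₁ μ)
    (hIntN0 : Integrable (Ynat 0) μ) (hIntN1 : Integrable (Ynat 1) μ)
    (hIntF0 : Integrable (Yful 0) μ) (hIntF1 : Integrable (Yful 1) μ)
    (hpos : ∀ (w : 𝒲) (y : 𝒴₀) (r a : Fin 2),
      0 < μ {ω | W ω = w ∧ Y₀ ω = y ∧ R ω = r ∧ A ω = a})
    (Q1 : 𝒲 → 𝒴₀ → Fin 2 → ℝ)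
    (hQ1 : ∀ (w : 𝒲) (y : 𝒴₀) (a : Fin 2),
      Q1 w y a = cexp μ Y₁ {ω | W ω = w ∧ Y₀ ω = y ∧ A ω = a ∧ R ω = 1})
    (Q0 : 𝒲 → Fin 2 → ℝ)
    (hQ0 : ∀ (w : 𝒲) (a : Fin 2), Q0 w a = cexp μ Y₁ {ω | W ω = w ∧ A ω = a ∧ R ω = 0})
    (π1 : 𝒲 → 𝒴₀ → ℝ)
    (hπ1 : ∀ (w : 𝒲) (y : 𝒴₀),
      π1 w y = (cprob μ {ω | A ω = 1} {ω | W ω = w ∧ Y₀ ω = y ∧ R ω = 1}).toReal)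
    (π0 : 𝒲 → ℝ)
    (hπ0 : ∀ w : 𝒲, π0 w = (cprob μ {ω | A ω = 1} {ω | W ω = w ∧ R ω = 0}).toReal)
    :
    ∫ ω, (((if R ω = 1 then Q1 (W ω) (Y₀ ω) 1 else Q0 (W ω) 1)
            - (if R ω = 1 then Q1 (W ω) (Y₀ ω) 0 else Q0 (W ω) 0))
          + (((A ω : ℕ) : ℝ) - (if R ω = 1 then π1 (W ω) (Y₀ ω) else π0 (W ω)))
              / ((if R ω = 1 then π1 (W ω) (Y₀ ω) else π0 (W ω))
                  * (1 - (if R ω = 1 then π1 (W ω) (Y₀ ω) else π0 (W ω))))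
              * (Y₁ ω - (if R ω = 1 then Q1 (W ω) (Y₀ ω) (A ω) else Q0 (W ω) (A ω)))) ∂μ
      = (∫ ω, Ynat 1 ω ∂μ) - (∫ ω, Ynat 0 ω ∂μ) := by
  classical
  -- measurability of structural maps
  have hY₀m : Measurable Y₀ := by
    have h : Y₀ = fun ω => f₀ (W ω, U₀ ω) := funext hY₀
    rw [h]; exact hf₀.comp (hW.prodMk hU₀)
  have hRm : Measurable R := by
    have h : R = fun ω => fR (W ω, UR ω) := funext hR
    rw [h]; exact hfR.comp (hW.prodMk hUR)
  have hR1 : MeasurableSet {ω | R ω = 1} := hRm (measurableSet_singleton 1)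
  have hAm : Measurable A := by
    have h : A = fun ω => if R ω = 1 then fA (W ω, Y₀ ω, UA ω) else gA (W ω, UA ω) := funext hA
    rw [h]
    exact Measurable.ite hR1 (hfA.comp (hW.prodMk (hY₀m.prodMk hUA)))
      (hgA.comp (hW.prodMk hUA))
  set T : Ω → 𝒲 × 𝒴₀ × Fin 2 × Fin 2 := fun ω => (W ω, Y₀ ω, R ω, A ω) with hTdef
  have hTm : Measurable T := hW.prodMk (hY₀m.prodMk (hRm.prodMk hAm))
  set V : Ω → 𝒲 × 𝒰₀ × 𝒰R × 𝒰A := fun ω => (W ω, U₀ ω, UR ω, UA ω) with hVdef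
  have hVm : Measurable V := hW.prodMk (hU₀.prodMk (hUR.prodMk hUA))
  set Φ : 𝒲 × 𝒰₀ × 𝒰R × 𝒰A → 𝒲 × 𝒴₀ × Fin 2 × Fin 2 := fun p =>
    (p.1, f₀ (p.1, p.2.1), fR (p.1, p.2.2.1),
      if fR (p.1, p.2.2.1) = 1 then fA (p.1, f₀ (p.1, p.2.1), p.2.2.2)
      else gA (p.1, p.2.2.2)) with hΦdef
  have m1 : Measurable fun p : 𝒲 × 𝒰₀ × 𝒰R × 𝒰A => p.1 := measurable_fst
  have m21 : Measurable fun p : 𝒲 × 𝒰₀ × 𝒰R × 𝒰A => p.2.1 :=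
    measurable_fst.comp measurable_snd
  have m221 : Measurable fun p : 𝒲 × 𝒰₀ × 𝒰R × 𝒰A => p.2.2.1 :=
    measurable_fst.comp (measurable_snd.comp measurable_snd)
  have m222 : Measurable fun p : 𝒲 × 𝒰₀ × 𝒰R × 𝒰A => p.2.2.2 :=
    measurable_snd.comp (measurable_snd.comp measurable_snd)
  have hΦm : Measurable Φ := by
    apply Measurable.prodMk m1
    apply Measurable.prodMk (hf₀.comp (m1.prodMk m21))
    apply Measurable.prodMk (hfR.comp (m1.prodMk m221))
    exact Measurable.ite ((hfR.comp (m1.prodMk m221)) (measurableSet_singleton 1))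
      (hfA.comp (m1.prodMk ((hf₀.comp (m1.prodMk m21)).prodMk m222)))
      (hgA.comp (m1.prodMk m222))
  have hTV : ∀ ω, T ω = Φ (V ω) := by
    intro ω
    simp only [hTdef, hΦdef, hVdef, Prod.mk.injEq]
    refine ⟨trivial, hY₀ ω, hR ω, ?_⟩
    rw [hA ω, hR ω, hY₀ ω]
  -- independence of V and UY
  have hIndepVU : IndepFun V UY μ := by
    set m : Fin 5 → MeasurableSpace Ω :=
      ![MeasurableSpace.comap W inferInstance, MeasurableSpace.comap U₀ inferInstance,
        MeasurableSpace.comap UR inferInstance, MeasurableSpace.comap UA inferInstance,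
        MeasurableSpace.comap UY inferInstance] with hmdef
    have h_le : ∀ i, m i ≤ ‹MeasurableSpace Ω› := by
      intro i
      fin_cases i
      · exact measurable_iff_comap_le.1 hW
      · exact measurable_iff_comap_le.1 hU₀
      · exact measurable_iff_comap_le.1 hUR
      · exact measurable_iff_comap_le.1 hUA
      · exact measurable_iff_comap_le.1 hUY
    have hdisj : Disjoint ({0,1,2,3} : Set (Fin 5)) ({4} : Set (Fin 5)) := by
      rw [Set.disjoint_singleton_right]
      simp
    have hsup := indep_iSup_of_disjoint h_le hIndep hdisj
    have h0 : m 0 ≤ ⨆ i ∈ ({0,1,2,3} : Set (Fin 5)), m i := le_biSup m (by simp)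
    have h1 : m 1 ≤ ⨆ i ∈ ({0,1,2,3} : Set (Fin 5)), m i := le_biSup m (by simp)
    have h2 : m 2 ≤ ⨆ i ∈ ({0,1,2,3} : Set (Fin 5)), m i := le_biSup m (by simp)
    have h3 : m 3 ≤ ⨆ i ∈ ({0,1,2,3} : Set (Fin 5)), m i := le_biSup m (by simp)
    have hVsup : Measurable[⨆ i ∈ ({0,1,2,3} : Set (Fin 5)), m i] V := by
      refine Measurable.prodMk ?_ (Measurable.prodMk ?_ (Measurable.prodMk ?_ ?_))
      · exact Measurable.of_comap_le h0
      · exact Measurable.of_comap_le h1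
      · exact Measurable.of_comap_le h2
      · exact Measurable.of_comap_le h3
    have hleft : MeasurableSpace.comap V inferInstance
        ≤ ⨆ i ∈ ({0,1,2,3} : Set (Fin 5)), m i := measurable_iff_comap_le.1 hVsup
    have hright : MeasurableSpace.comap UY inferInstance
        ≤ ⨆ i ∈ ({4} : Set (Fin 5)), m i :=
      le_biSup m (show (4 : Fin 5) ∈ ({4} : Set (Fin 5)) by simp)
    exact indep_of_indep_of_le_right (indep_of_indep_of_le_left hsup hleft) hright
  -- the key independence/integration tool
  have hDisc : ∀ K : Set (𝒲 × 𝒴₀ × Fin 2 × Fin 2), MeasurableSet K :=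
    fun K => MeasurableSet.of_discrete
  have hTpre : ∀ K : Set (𝒲 × 𝒴₀ × Fin 2 × Fin 2), T ⁻¹' K = V ⁻¹' (Φ ⁻¹' K) := by
    intro K; ext ω; simp only [Set.mem_preimage, hTV ω]
  have keyT : ∀ (K : Set (𝒲 × 𝒴₀ × Fin 2 × Fin 2)) (φ : 𝒰Y → ℝ), Measurable φ →
      IntegrableOn (fun ω => φ (UY ω)) (T ⁻¹' K) μ → μ (T ⁻¹' K) ≠ 0 →
      Integrable (fun ω => φ (UY ω)) μ ∧
        ∫ ω in T ⁻¹' K, φ (UY ω) ∂μ = (μ (T ⁻¹' K)).toReal * ∫ ω, φ (UY ω) ∂μ := by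
    intro K φ hφ hInt hne
    rw [hTpre K] at hInt hne ⊢
    exact aux_indep_setIntegral μ hVm hUY hIndepVU (hΦm (hDisc K)) hφ hInt hne
  -- cells
  have hcm : ∀ k : 𝒲 × 𝒴₀ × Fin 2 × Fin 2, MeasurableSet (T ⁻¹' {k}) :=
    fun k => hTm (measurableSet_singleton k)
  have hmemc : ∀ (w : 𝒲) (y : 𝒴₀) (r a : Fin 2) (ω : Ω), ω ∈ T ⁻¹' {(w,y,r,a)} →
      W ω = w ∧ Y₀ ω = y ∧ R ω = r ∧ A ω = a := by
    intro w y r a ω hω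
    simpa [hTdef, Prod.ext_iff] using hω
  have hposc : ∀ (w : 𝒲) (y : 𝒴₀) (r a : Fin 2), μ (T ⁻¹' {(w,y,r,a)}) ≠ 0 := by
    intro w y r a
    have hset : {ω | W ω = w ∧ Y₀ ω = y ∧ R ω = r ∧ A ω = a} = T ⁻¹' {(w,y,r,a)} := by
      ext ω
      simp [hTdef, Prod.ext_iff]
    rw [← hset]
    exact (hpos w y r a).ne'
  have hμfin : ∀ s : Set Ω, μ s ≠ ⊤ := fun s => measure_ne_top μ s
  have htoR : ∀ s : Set Ω, μ s ≠ 0 → (μ s).toReal ≠ 0 :=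
    fun s h => ENNReal.toReal_ne_zero.2 ⟨h, hμfin s⟩
  have hcexp : ∀ (s : Set Ω) (x : ℝ), μ s ≠ 0 → x = cexp μ Y₁ s →
      ∫ ω in s, Y₁ ω ∂μ = (μ s).toReal * x := by
    intro s x h0 hx
    rw [hx, cexp, ← mul_assoc, mul_inv_cancel₀ (htoR s h0), one_mul]
  -- set identifications
  have hDset : ∀ (w : 𝒲) (y : 𝒴₀) (a : Fin 2),
      {ω | W ω = w ∧ Y₀ ω = y ∧ A ω = a ∧ R ω = 1} = T ⁻¹' {(w,y,1,a)} := by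
    intro w y a; ext ω
    simp only [hTdef, Set.mem_setOf_eq, Set.mem_preimage, Set.mem_singleton_iff,
      Prod.mk.injEq]
    tauto
  set K0 : 𝒲 → Fin 2 → Set (𝒲 × 𝒴₀ × Fin 2 × Fin 2) :=
    fun w a => {k | k.1 = w ∧ k.2.2.1 = 0 ∧ k.2.2.2 = a} with hK0def
  have hE0set : ∀ (w : 𝒲) (a : Fin 2),
      {ω | W ω = w ∧ A ω = a ∧ R ω = 0} = T ⁻¹' K0 w a := by
    intro w a; ext ω
    simp only [hTdef, hK0def, Set.mem_setOf_eq, Set.mem_preimage]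
    tauto
  have hE0union : ∀ (w : 𝒲) (a : Fin 2),
      T ⁻¹' K0 w a = ⋃ y : 𝒴₀, T ⁻¹' {(w,y,0,a)} := by
    intro w a; ext ω
    simp only [hTdef, hK0def, Set.mem_preimage, Set.mem_iUnion, Set.mem_setOf_eq,
      Set.mem_singleton_iff, Prod.mk.injEq]
    constructor
    · rintro ⟨h1, h2, h3⟩; exact ⟨Y₀ ω, h1, rfl, h2, h3⟩
    · rintro ⟨y, h1, h2, h3, h4⟩; exact ⟨h1, h3, h4⟩
  -- measurable parameterized slices
  have hφf : ∀ (w : 𝒲) (y : 𝒴₀) (a : Fin 2), Measurable fun u => fY (w, y, a, u) :=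
    fun w y a => hfY.comp (measurable_const.prodMk (measurable_const.prodMk
      (measurable_const.prodMk measurable_id)))
  have hφg : ∀ (w : 𝒲) (a : Fin 2), Measurable fun u => gY (w, a, u) :=
    fun w a => hgY.comp (measurable_const.prodMk (measurable_const.prodMk measurable_id))
  -- Y₁ on cells
  have hY₁eq1 : ∀ (w : 𝒲) (y : 𝒴₀) (a : Fin 2),
      Set.EqOn Y₁ (fun ω => fY (w, y, a, UY ω)) (T ⁻¹' {(w,y,1,a)}) := by
    intro w y a ω hω
    obtain ⟨h1, h2, h3, h4⟩ := hmemc w y 1 a ω hω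
    simp only
    rw [hY₁ ω, if_pos h3, h1, h2, h4]
  have hY₁eq0 : ∀ (w : 𝒲) (a : Fin 2), Set.EqOn Y₁ (fun ω => gY (w, a, UY ω))
      (T ⁻¹' K0 w a) := by
    intro w a ω hω
    have h : (T ω).1 = w ∧ (T ω).2.2.1 = 0 ∧ (T ω).2.2.2 = a := hω
    have h1 : W ω = w := h.1
    have h3 : R ω = 0 := h.2.1
    have h4 : A ω = a := h.2.2
    simp only
    rw [hY₁ ω, if_neg (by rw [h3]; decide), h1, h4]
  -- Q1 identities
  have hIntOn1 : ∀ (w : 𝒲) (y : 𝒴₀) (a : Fin 2),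
      IntegrableOn (fun ω => fY (w, y, a, UY ω)) (T ⁻¹' {(w,y,1,a)}) μ :=
    fun w y a => hIntY₁.integrableOn.congr_fun (hY₁eq1 w y a) (hcm _)
  have hkey1 : ∀ (w : 𝒲) (y : 𝒴₀) (a : Fin 2),
      Integrable (fun ω => fY (w, y, a, UY ω)) μ ∧
        ∫ ω in T ⁻¹' {(w,y,1,a)}, fY (w, y, a, UY ω) ∂μ
          = (μ (T ⁻¹' {(w,y,1,a)})).toReal * ∫ ω, fY (w, y, a, UY ω) ∂μ :=
    fun w y a => keyT _ _ (hφf w y a) (hIntOn1 w y a) (hposc w y 1 a)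
  have hQ1I : ∀ (w : 𝒲) (y : 𝒴₀) (a : Fin 2),
      Q1 w y a = ∫ ω, fY (w, y, a, UY ω) ∂μ := by
    intro w y a
    rw [hQ1 w y a, cexp, hDset w y a,
      setIntegral_congr_fun (hcm _) (hY₁eq1 w y a), (hkey1 w y a).2, ← mul_assoc,
      inv_mul_cancel₀ (htoR _ (hposc w y 1 a)), one_mul]
  have hY₁cell1 : ∀ (w : 𝒲) (y : 𝒴₀) (a : Fin 2),
      ∫ ω in T ⁻¹' {(w,y,1,a)}, Y₁ ω ∂μ = (μ (T ⁻¹' {(w,y,1,a)})).toReal * Q1 w y a := by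
    intro w y a
    exact hcexp _ _ (hposc w y 1 a) (by rw [hQ1 w y a, hDset w y a])
  have hcellF : ∀ (w : 𝒲) (y : 𝒴₀) (a' a : Fin 2),
      ∫ ω in T ⁻¹' {(w,y,1,a')}, fY (w, y, a, UY ω) ∂μ
        = (μ (T ⁻¹' {(w,y,1,a')})).toReal * Q1 w y a := by
    intro w y a' a
    rw [(keyT {(w,y,1,a')} _ (hφf w y a) ((hkey1 w y a).1.integrableOn) (hposc w y 1 a')).2,
      hQ1I w y a]
  -- Q0 identities
  have hpos0 : ∀ (w : 𝒲) (a : Fin 2), μ (T ⁻¹' K0 w a) ≠ 0 := by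
    intro w a
    have hy : (T ⁻¹' {(w, Classical.arbitrary 𝒴₀, 0, a)}) ⊆ T ⁻¹' K0 w a := by
      intro ω hω
      obtain ⟨h1, h2, h3, h4⟩ := hmemc _ _ _ _ ω hω
      show (T ω).1 = w ∧ (T ω).2.2.1 = 0 ∧ (T ω).2.2.2 = a
      exact ⟨h1, h3, h4⟩
    intro h0
    exact hposc w (Classical.arbitrary 𝒴₀) 0 a (measure_mono_null hy h0)
  have hIntOn0 : ∀ (w : 𝒲) (a : Fin 2),
      IntegrableOn (fun ω => gY (w, a, UY ω)) (T ⁻¹' K0 w a) μ :=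
    fun w a => hIntY₁.integrableOn.congr_fun (hY₁eq0 w a) (hTm (hDisc _))
  have hkey0 : ∀ (w : 𝒲) (a : Fin 2),
      Integrable (fun ω => gY (w, a, UY ω)) μ ∧
        ∫ ω in T ⁻¹' K0 w a, gY (w, a, UY ω) ∂μ
          = (μ (T ⁻¹' K0 w a)).toReal * ∫ ω, gY (w, a, UY ω) ∂μ :=
    fun w a => keyT _ _ (hφg w a) (hIntOn0 w a) (hpos0 w a)
  have hQ0I : ∀ (w : 𝒲) (a : Fin 2), Q0 w a = ∫ ω, gY (w, a, UY ω) ∂μ := by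
    intro w a
    rw [hQ0 w a, cexp, hE0set w a, setIntegral_congr_fun (hTm (hDisc _)) (hY₁eq0 w a),
      (hkey0 w a).2, ← mul_assoc, inv_mul_cancel₀ (htoR _ (hpos0 w a)), one_mul]
  have hY₁E0 : ∀ (w : 𝒲) (a : Fin 2),
      ∫ ω in T ⁻¹' K0 w a, Y₁ ω ∂μ = (μ (T ⁻¹' K0 w a)).toReal * Q0 w a :=
    fun w a => hcexp _ _ (hpos0 w a) (by rw [hQ0 w a, hE0set w a])
  have hcellG : ∀ (w : 𝒲) (y : 𝒴₀) (a' a : Fin 2),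
      ∫ ω in T ⁻¹' {(w,y,0,a')}, gY (w, a, UY ω) ∂μ
        = (μ (T ⁻¹' {(w,y,0,a')})).toReal * Q0 w a := by
    intro w y a' a
    rw [(keyT {(w,y,0,a')} _ (hφg w a) ((hkey0 w a).1.integrableOn) (hposc w y 0 a')).2,
      hQ0I w a]
  -- Ynat on cells
  have hNat1 : ∀ (w : 𝒲) (y : 𝒴₀) (a' a : Fin 2),
      ∫ ω in T ⁻¹' {(w,y,1,a')}, Ynat a ω ∂μ
        = (μ (T ⁻¹' {(w,y,1,a')})).toReal * Q1 w y a := by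
    intro w y a' a
    have hEq : Set.EqOn (Ynat a) (fun ω => fY (w, y, a, UY ω)) (T ⁻¹' {(w,y,1,a')}) := by
      intro ω hω
      obtain ⟨h1, h2, h3, h4⟩ := hmemc w y 1 a' ω hω
      simp only
      rw [hYnat a ω, if_pos h3, h1, h2]
    rw [setIntegral_congr_fun (hcm _) hEq, hcellF w y a' a]
  have hNat0 : ∀ (w : 𝒲) (y : 𝒴₀) (a' a : Fin 2),
      ∫ ω in T ⁻¹' {(w,y,0,a')}, Ynat a ω ∂μ
        = (μ (T ⁻¹' {(w,y,0,a')})).toReal * Q0 w a := by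
    intro w y a' a
    have hEq : Set.EqOn (Ynat a) (fun ω => gY (w, a, UY ω)) (T ⁻¹' {(w,y,0,a')}) := by
      intro ω hω
      obtain ⟨h1, h2, h3, h4⟩ := hmemc w y 0 a' ω hω
      simp only
      rw [hYnat a ω, if_neg (by rw [h3]; decide), h1]
    rw [setIntegral_congr_fun (hcm _) hEq, hcellG w y a' a]
  -- residual sums to zero over y for r = 0
  have hd0 : ∀ (w : 𝒲) (a : Fin 2),
      Pairwise (Function.onFun Disjoint fun y : 𝒴₀ => T ⁻¹' {(w,y,0,a)}) := by
    intro w a y y' hyy'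
    apply Set.disjoint_left.2
    intro ω h1 h2
    obtain ⟨_, e1, _, _⟩ := hmemc w y 0 a ω h1
    obtain ⟨_, e2, _, _⟩ := hmemc w y' 0 a ω h2
    exact hyy' (e1.symm.trans e2)
  have hres0 : ∀ (w : 𝒲) (a : Fin 2),
      ∑ y : 𝒴₀, (∫ ω in T ⁻¹' {(w,y,0,a)}, Y₁ ω ∂μ
        - (μ (T ⁻¹' {(w,y,0,a)})).toReal * Q0 w a) = 0 := by
    intro w a
    rw [Finset.sum_sub_distrib, ← Finset.sum_mul]
    have hU : (⋃ y : 𝒴₀, T ⁻¹' {(w,y,0,a)}) = T ⁻¹' K0 w a := (hE0union w a).symm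
    have h1 : ∑ y : 𝒴₀, ∫ ω in T ⁻¹' {(w,y,0,a)}, Y₁ ω ∂μ
        = ∫ ω in T ⁻¹' K0 w a, Y₁ ω ∂μ := by
      rw [← hU, integral_iUnion (fun y => hcm _) (hd0 w a)
        (by rw [hU]; exact hIntY₁.integrableOn), tsum_fintype]
    have h2 : ∑ y : 𝒴₀, (μ (T ⁻¹' {(w,y,0,a)})).toReal = (μ (T ⁻¹' K0 w a)).toReal := by
      rw [← hU, measure_iUnion (hd0 w a) (fun y => hcm _), tsum_fintype,
        ENNReal.toReal_sum (fun _ _ => hμfin _)]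
    rw [h1, h2, hY₁E0 w a, sub_self]
  -- coefficient functions on the discrete context space
  set c2 : 𝒲 × 𝒴₀ × Fin 2 × Fin 2 → ℝ := fun k =>
    (((k.2.2.2 : ℕ) : ℝ) - (if k.2.2.1 = 1 then π1 k.1 k.2.1 else π0 k.1))
      / ((if k.2.2.1 = 1 then π1 k.1 k.2.1 else π0 k.1)
          * (1 - (if k.2.2.1 = 1 then π1 k.1 k.2.1 else π0 k.1))) with hc2def
  set c1 : 𝒲 × 𝒴₀ × Fin 2 × Fin 2 → ℝ := fun k =>
    ((if k.2.2.1 = 1 then Q1 k.1 k.2.1 1 else Q0 k.1 1)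
      - (if k.2.2.1 = 1 then Q1 k.1 k.2.1 0 else Q0 k.1 0))
      - c2 k * (if k.2.2.1 = 1 then Q1 k.1 k.2.1 k.2.2.2 else Q0 k.1 k.2.2.2) with hc1def
  have hrepr : ∀ ω, (((if R ω = 1 then Q1 (W ω) (Y₀ ω) 1 else Q0 (W ω) 1)
            - (if R ω = 1 then Q1 (W ω) (Y₀ ω) 0 else Q0 (W ω) 0))
          + (((A ω : ℕ) : ℝ) - (if R ω = 1 then π1 (W ω) (Y₀ ω) else π0 (W ω)))
              / ((if R ω = 1 then π1 (W ω) (Y₀ ω) else π0 (W ω))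
                  * (1 - (if R ω = 1 then π1 (W ω) (Y₀ ω) else π0 (W ω))))
              * (Y₁ ω - (if R ω = 1 then Q1 (W ω) (Y₀ ω) (A ω) else Q0 (W ω) (A ω))))
      = c1 (T ω) + c2 (T ω) * Y₁ ω := by
    intro ω
    simp only [hc1def, hc2def, hTdef]
    ring
  have hc1val1 : ∀ (w : 𝒲) (y : 𝒴₀) (a : Fin 2),
      c1 (w,y,1,a) = (Q1 w y 1 - Q1 w y 0) - c2 (w,y,1,a) * Q1 w y a := by
    intro w y a; simp [hc1def]
  have hc1val0 : ∀ (w : 𝒲) (y : 𝒴₀) (a : Fin 2),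
      c1 (w,y,0,a) = (Q0 w 1 - Q0 w 0) - c2 (w,y,0,a) * Q0 w a := by
    intro w y a; simp [hc1def]
  have hc2val0 : ∀ (w : 𝒲) (y : 𝒴₀) (a : Fin 2),
      c2 (w,y,0,a) = (((a : ℕ) : ℝ) - π0 w) / (π0 w * (1 - π0 w)) := by
    intro w y a; simp [hc2def]
  -- integrability of the AIPW score
  have hMc1 : Integrable (fun ω => c1 (T ω)) μ := by
    refine Integrable.mono' (integrable_const (∑ k, |c1 k|))
      (((Measurable.of_discrete (f := c1)).comp hTm).aestronglyMeasurable) (ae_of_all _ fun ω => ?_)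
    rw [Real.norm_eq_abs]
    exact Finset.single_le_sum (f := fun k => |c1 k|) (fun k _ => abs_nonneg _)
      (Finset.mem_univ (T ω))
  have hMc2Y : Integrable (fun ω => c2 (T ω) * Y₁ ω) μ := by
    refine hIntY₁.bdd_mul (((Measurable.of_discrete (f := c2)).comp hTm).aestronglyMeasurable)
      (c := ∑ k, |c2 k|) (ae_of_all _ fun ω => ?_)
    rw [Real.norm_eq_abs]
    exact Finset.single_le_sum (f := fun k => |c2 k|) (fun k _ => abs_nonneg _)
      (Finset.mem_univ (T ω))
  have hIntBig : Integrable (fun ω =>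
      (((if R ω = 1 then Q1 (W ω) (Y₀ ω) 1 else Q0 (W ω) 1)
            - (if R ω = 1 then Q1 (W ω) (Y₀ ω) 0 else Q0 (W ω) 0))
          + (((A ω : ℕ) : ℝ) - (if R ω = 1 then π1 (W ω) (Y₀ ω) else π0 (W ω)))
              / ((if R ω = 1 then π1 (W ω) (Y₀ ω) else π0 (W ω))
                  * (1 - (if R ω = 1 then π1 (W ω) (Y₀ ω) else π0 (W ω))))
              * (Y₁ ω - (if R ω = 1 then Q1 (W ω) (Y₀ ω) (A ω) else Q0 (W ω) (A ω))))) μ := by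
    have h : (fun ω =>
      (((if R ω = 1 then Q1 (W ω) (Y₀ ω) 1 else Q0 (W ω) 1)
            - (if R ω = 1 then Q1 (W ω) (Y₀ ω) 0 else Q0 (W ω) 0))
          + (((A ω : ℕ) : ℝ) - (if R ω = 1 then π1 (W ω) (Y₀ ω) else π0 (W ω)))
              / ((if R ω = 1 then π1 (W ω) (Y₀ ω) else π0 (W ω))
                  * (1 - (if R ω = 1 then π1 (W ω) (Y₀ ω) else π0 (W ω))))
              * (Y₁ ω - (if R ω = 1 then Q1 (W ω) (Y₀ ω) (A ω) else Q0 (W ω) (A ω)))))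
        = fun ω => c1 (T ω) + c2 (T ω) * Y₁ ω := funext hrepr
    rw [h]
    exact hMc1.add hMc2Y
  -- evaluation of the score integral on each cell
  have hLcell : ∀ (w : 𝒲) (y : 𝒴₀) (r a : Fin 2),
      ∫ ω in T ⁻¹' {(w,y,r,a)},
        (((if R ω = 1 then Q1 (W ω) (Y₀ ω) 1 else Q0 (W ω) 1)
            - (if R ω = 1 then Q1 (W ω) (Y₀ ω) 0 else Q0 (W ω) 0))
          + (((A ω : ℕ) : ℝ) - (if R ω = 1 then π1 (W ω) (Y₀ ω) else π0 (W ω)))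
              / ((if R ω = 1 then π1 (W ω) (Y₀ ω) else π0 (W ω))
                  * (1 - (if R ω = 1 then π1 (W ω) (Y₀ ω) else π0 (W ω))))
              * (Y₁ ω - (if R ω = 1 then Q1 (W ω) (Y₀ ω) (A ω) else Q0 (W ω) (A ω)))) ∂μ
        = (μ (T ⁻¹' {(w,y,r,a)})).toReal * c1 (w,y,r,a)
          + c2 (w,y,r,a) * ∫ ω in T ⁻¹' {(w,y,r,a)}, Y₁ ω ∂μ := by
    intro w y r a
    have hEq : Set.EqOn (fun ω =>
        (((if R ω = 1 then Q1 (W ω) (Y₀ ω) 1 else Q0 (W ω) 1)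
            - (if R ω = 1 then Q1 (W ω) (Y₀ ω) 0 else Q0 (W ω) 0))
          + (((A ω : ℕ) : ℝ) - (if R ω = 1 then π1 (W ω) (Y₀ ω) else π0 (W ω)))
              / ((if R ω = 1 then π1 (W ω) (Y₀ ω) else π0 (W ω))
                  * (1 - (if R ω = 1 then π1 (W ω) (Y₀ ω) else π0 (W ω))))
              * (Y₁ ω - (if R ω = 1 then Q1 (W ω) (Y₀ ω) (A ω) else Q0 (W ω) (A ω)))))
        (fun ω => c1 (w,y,r,a) + c2 (w,y,r,a) * Y₁ ω) (T ⁻¹' {(w,y,r,a)}) := by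
      intro ω hω
      have h : T ω = (w,y,r,a) := hω
      simp only
      rw [hrepr ω, h]
    rw [setIntegral_congr_fun (hcm _) hEq, integral_add (integrable_const _)
      (hIntY₁.integrableOn.const_mul _), setIntegral_const, integral_const_mul, smul_eq_mul, measureReal_def]
  rw [aux_integral_partition μ hTm hIntBig, aux_integral_partition μ hTm hIntN1,
    aux_integral_partition μ hTm hIntN0, ← Finset.sum_sub_distrib]
  simp only [Fintype.sum_prod_type]
  refine Finset.sum_congr rfl fun w _ => ?_
  rw [Finset.sum_comm]
  conv_rhs => rw [Finset.sum_comm]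
  rw [Fin.sum_univ_two]
  conv_rhs => rw [Fin.sum_univ_two]
  congr 1
  · trans (∑ y : 𝒴₀, ∑ a : Fin 2, ((μ (T ⁻¹' {(w,y,0,a)})).toReal * (Q0 w 1 - Q0 w 0)
        + c2 (w,y,0,a) * (∫ ω in T ⁻¹' {(w,y,0,a)}, Y₁ ω ∂μ
          - (μ (T ⁻¹' {(w,y,0,a)})).toReal * Q0 w a)))
    · exact Finset.sum_congr rfl fun y _ => Finset.sum_congr rfl fun a _ => by
        rw [hLcell w y 0 a, hc1val0 w y a]; ring
    · simp only [Finset.sum_add_distrib]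
      have hz : ∑ y : 𝒴₀, ∑ a : Fin 2, c2 (w,y,0,a) * (∫ ω in T ⁻¹' {(w,y,0,a)}, Y₁ ω ∂μ
          - (μ (T ⁻¹' {(w,y,0,a)})).toReal * Q0 w a) = 0 := by
        rw [Finset.sum_comm]
        refine Finset.sum_eq_zero fun a _ => ?_
        have hcc : ∀ y : 𝒴₀, c2 (w,y,0,a) * (∫ ω in T ⁻¹' {(w,y,0,a)}, Y₁ ω ∂μ
            - (μ (T ⁻¹' {(w,y,0,a)})).toReal * Q0 w a)
            = (((a : ℕ) : ℝ) - π0 w) / (π0 w * (1 - π0 w))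
              * (∫ ω in T ⁻¹' {(w,y,0,a)}, Y₁ ω ∂μ
                - (μ (T ⁻¹' {(w,y,0,a)})).toReal * Q0 w a) :=
          fun y => by rw [hc2val0 w y a]
        rw [Finset.sum_congr rfl fun y _ => hcc y, ← Finset.mul_sum, hres0 w a, mul_zero]
      rw [hz, add_zero]
      exact Finset.sum_congr rfl fun y _ => Finset.sum_congr rfl fun a _ => by
        rw [hNat0 w y a 1, hNat0 w y a 0]; ring
  · exact Finset.sum_congr rfl fun y _ => Finset.sum_congr rfl fun a _ => by
      rw [hLcell w y 1 a, hc1val1 w y a, hY₁cell1 w y a, hNat1 w y a 1, hNat1 w y a 0]; ring
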